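/- Let (E, Φ) be a representation of a Euclidean Jordan algebra J with quadratic map Q: E → J, c a CSOI, and Q_j: E_j → J_j the quadratic maps of the restricted representations. Then for ξ = ξ₁+⋯+ξ_k ∈ E = ⊕E_j, the orthogonal projection of Q(ξ) onto J(c) equals Σ_j Q_j(ξ_j). -/

import Mathlib

set_option linter.unusedSectionVars false

open scoped RealInnerProductSpace

/-- A Euclidean Jordan algebra structure on a finite-dimensional real inner
product space: a commutative bilinear product satisfying the Jordan identity,
with unit `one`, such that the inner product is associative. -/
structure EJA (J : Type) [NormedAddCommGroup J] [InnerProductSpace ℝ J] : Type where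
  mul : J →ₗ[ℝ] J →ₗ[ℝ] J
  comm : ∀ x y : J, mul x y = mul y x
  jordan : ∀ x y : J, mul (mul x y) (mul x x) = mul x (mul y (mul x x))
  one : J
  one_mul : ∀ x : J, mul one x = x
  assoc_inner : ∀ x y z : J, ⟪mul x y, z⟫ = ⟪y, mul x z⟫

variable {J : Type} [NormedAddCommGroup J] [InnerProductSpace ℝ J] [FiniteDimensional ℝ J]

/-- The Peirce `μ`-eigenspace of the idempotent `c`. -/
noncomputable def EJA.peirce (A : EJA J) (c : J) (μ : ℝ) : Submodule ℝ J :=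
  Module.End.eigenspace (A.mul c : Module.End ℝ J) μ

/-- A complete system of orthogonal idempotents. -/
def EJA.IsCSOI (A : EJA J) {k : ℕ} (c : Fin k → J) : Prop :=
  (∀ j, A.mul (c j) (c j) = c j) ∧ (∀ i j, i ≠ j → A.mul (c i) (c j) = 0) ∧
    (∑ j, c j) = A.one

/-- `y` is the Jordan inverse of `x`:  `x∘y = e` and `x²∘y = x`. -/
def EJA.IsInv (A : EJA J) (x y : J) : Prop :=
  A.mul x y = A.one ∧ A.mul (A.mul x x) y = x

variable {E : Type} [NormedAddCommGroup E] [InnerProductSpace ℝ E] [FiniteDimensional ℝ E]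

/-- A representation of the Euclidean Jordan algebra `J` on the Euclidean
space `E`: a unital Jordan algebra morphism into symmetric endomorphisms. -/
def EJA.IsRep (A : EJA J) (Φ : J →ₗ[ℝ] E →ₗ[ℝ] E) : Prop :=
  (∀ (x : J) (ξ η : E), ⟪Φ x ξ, η⟫ = ⟪ξ, Φ x η⟫) ∧
  (∀ x y : J, Φ (A.mul x y) = (2 : ℝ)⁻¹ • (Φ x ∘ₗ Φ y + Φ y ∘ₗ Φ x)) ∧
  Φ A.one = LinearMap.id

/-- The subspace `E_j`: the `1`-eigenspace of the projection `Φ(c_j)`. -/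
noncomputable def EJA.repSpace (A : EJA J) (Φ : J →ₗ[ℝ] E →ₗ[ℝ] E)
    {k : ℕ} (c : Fin k → J) (j : Fin k) : Submodule ℝ E :=
  Module.End.eigenspace (Φ (c j) : Module.End ℝ E) 1

/-- Linearized Jordan identity. -/
lemma EJA.lin (A : EJA J) (x z y : J) :
    A.mul (A.mul z y) (A.mul x x) + (2:ℝ) • A.mul (A.mul x y) (A.mul x z)
      = A.mul z (A.mul y (A.mul x x)) + (2:ℝ) • A.mul x (A.mul y (A.mul x z)) := by
  have h1 := A.jordan (x + z) y
  have h2 := A.jordan (x - z) y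
  have h4 := A.jordan z y
  simp only [map_add, map_sub, LinearMap.add_apply, LinearMap.sub_apply] at h1 h2
  rw [A.comm z x] at h1 h2
  linear_combination (norm := module) ((2:ℝ)⁻¹) • h1 - ((2:ℝ)⁻¹) • h2 - h4

/-- Cubic identity for the multiplication operator of an idempotent. -/
lemma EJA.cubic (A : EJA J) (p : J) (hp : A.mul p p = p) (z : J) :
    (2:ℝ) • A.mul p (A.mul p (A.mul p z)) + A.mul p z
      = (3:ℝ) • A.mul p (A.mul p z) := by
  have h := A.lin p z p
  simp only [hp] at h
  rw [A.comm z p, A.comm (A.mul p z) p] at h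
  linear_combination (norm := module) -h

/-- Multiplication operators of orthogonal idempotents commute. -/
lemma EJA.comm_op (A : EJA J) (c d : J) (hd : A.mul d d = d)
    (hdc : A.mul d c = 0) (y : J) :
    A.mul c (A.mul d y) = A.mul d (A.mul c y) := by
  have h := A.lin d c y
  rw [hd, hdc] at h
  simp only [map_zero, LinearMap.zero_apply, smul_zero, add_zero] at h
  rw [A.comm d y, A.comm d (A.mul c y)]
  exact h.symm

/-- If `c,d` are orthogonal idempotents and `v` is in the 1-Peirce space of
`d`, then `c ∘ v = 0`. -/
lemma EJA.mul_peirce_zero (A : EJA J) (c d : J) (hc : A.mul c c = c)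
    (hd : A.mul d d = d) (hcd : A.mul c d = 0) (v : J) (hv : A.mul d v = v) :
    A.mul c v = 0 := by
  have hdc : A.mul d c = 0 := by rw [A.comm d c]; exact hcd
  have h1 : A.mul d (A.mul c v) = A.mul c v := by
    rw [← A.comm_op c d hd hdc, hv]
  have h2 : A.mul d (A.mul c (A.mul c v)) = A.mul c (A.mul c v) := by
    rw [← A.comm_op c d hd hdc, h1]
  have hsum : A.mul (c + d) (c + d) = c + d := by
    simp only [map_add, LinearMap.add_apply, hc, hd, hcd, hdc, add_zero, zero_add]
  have hcub1 := A.cubic c hc v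
  have hcub2 := A.cubic (c + d) hsum v
  simp only [map_add, LinearMap.add_apply, hv, h1, h2] at hcub2
  have h6 : (6:ℝ) • A.mul c (A.mul c v) = 0 := by
    linear_combination (norm := module) hcub2 - hcub1
  have h0 : A.mul c (A.mul c v) = 0 := by
    rcases smul_eq_zero.mp h6 with h | h
    · norm_num at h
    · exact h
  have : ⟪A.mul c v, A.mul c v⟫ = 0 := by
    rw [A.assoc_inner, h0, inner_zero_right]
  exact inner_self_eq_zero.mp this

lemma EJA.mem_peirce_iff (A : EJA J) {c : J} {x : J} :
    x ∈ A.peirce c 1 ↔ A.mul c x = x := by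
  rw [EJA.peirce, Module.End.mem_eigenspace_iff, one_smul]

/-- The orthogonal projection onto `J(c)` of `Q(ξ)` equals `Σ_j Q_j(ξ_j)`,
where `ξ_j = Φ(c_j)ξ` and `Q`, `Q_j` are the quadratic maps of the
representation and of its restrictions. -/
theorem stmt12 (A : EJA J) (Φ : J →ₗ[ℝ] E →ₗ[ℝ] E) (hΦ : A.IsRep Φ)
    (k : ℕ) (c : Fin k → J) (hc : A.IsCSOI c)
    (Q : E → J) (hQ : ∀ (ξ : E) (x : J), ⟪Q ξ, x⟫ = ⟪Φ x ξ, ξ⟫)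
    (Qj : Fin k → E → J)
    (hQj : ∀ (j : Fin k), ∀ ξ ∈ A.repSpace Φ c j,
      Qj j ξ ∈ A.peirce (c j) 1 ∧
        ∀ x ∈ A.peirce (c j) 1, ⟪Qj j ξ, x⟫ = ⟪Φ x ξ, ξ⟫) :
    ∀ ξ : E,
      ((Submodule.orthogonalProjectionOnto (⨆ j, A.peirce (c j) 1) (Q ξ) : J))
        = ∑ j, Qj j (Φ (c j) ξ) := by
  intro ξ
  obtain ⟨hidem, horth, -⟩ := hc
  -- Φ(c j) is an idempotent operator
  have hP2 : ∀ (j : Fin k) (η : E), Φ (c j) (Φ (c j) η) = Φ (c j) η := by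
    intro j η
    have h := hΦ.2.1 (c j) (c j)
    rw [hidem j] at h
    have h' := LinearMap.congr_fun h η
    simp only [LinearMap.smul_apply, LinearMap.add_apply, LinearMap.comp_apply] at h'
    linear_combination (norm := module) -h'
  -- membership of Φ(c j) ξ in the rep space
  have hmemE : ∀ j : Fin k, Φ (c j) ξ ∈ A.repSpace Φ c j := by
    intro j
    rw [EJA.repSpace, Module.End.mem_eigenspace_iff, one_smul]
    exact hP2 j ξ
  -- for x in the 1-Peirce space of c j, ⟪Φ x ξ, ξ⟫ = ⟪Φ x ξ_j, ξ_j⟫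
  have hloc : ∀ (j : Fin k) (x : J), A.mul (c j) x = x →
      ⟪Φ x ξ, ξ⟫ = ⟪Φ x (Φ (c j) ξ), Φ (c j) ξ⟫ := by
    intro j x hx
    have hxop : ∀ η : E, Φ x η
        = (2:ℝ)⁻¹ • (Φ (c j) (Φ x η) + Φ x (Φ (c j) η)) := by
      intro η
      have h := hΦ.2.1 (c j) x
      rw [hx] at h
      have h' := LinearMap.congr_fun h η
      simpa only [LinearMap.smul_apply, LinearMap.add_apply, LinearMap.comp_apply]
        using h'
    have ha : ∀ η : E, Φ x (Φ (c j) η) = Φ (c j) (Φ x (Φ (c j) η)) := by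
      intro η
      have h := hxop (Φ (c j) η)
      rw [hP2 j η] at h
      linear_combination (norm := module) (2:ℝ) • h
    have hb : ∀ η : E, Φ (c j) (Φ x η) = Φ x (Φ (c j) η) := by
      intro η
      have h := congrArg (Φ (c j)) (hxop η)
      rw [map_smul, map_add, hP2 j, ← ha η] at h
      linear_combination (norm := module) (2:ℝ) • h
    have hxi : Φ x ξ = Φ x (Φ (c j) ξ) := by
      have h := hxop ξ
      rw [hb ξ] at h
      linear_combination (norm := module) h
    rw [hxi]
    calc ⟪Φ x (Φ (c j) ξ), ξ⟫
        = ⟪Φ (c j) (Φ x (Φ (c j) ξ)), ξ⟫ := by rw [← ha ξ]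
      _ = ⟪Φ x (Φ (c j) ξ), Φ (c j) ξ⟫ := hΦ.1 (c j) _ ξ
  set V := ⨆ j, A.peirce (c j) 1 with hV
  set s := ∑ j, Qj j (Φ (c j) ξ) with hs
  have hmem : s ∈ V := by
    apply Submodule.sum_mem
    intro j _
    exact Submodule.mem_iSup_of_mem j ((hQj j _ (hmemE j)).1)
  have hperp : ∀ w ∈ V, ⟪Q ξ - s, w⟫ = 0 := by
    intro w hw
    refine Submodule.iSup_induction (motive := fun w => ⟪Q ξ - s, w⟫ = 0) _ hw ?_ ?_ ?_
    · intro i x hx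
      have hxe : A.mul (c i) x = x := A.mem_peirce_iff.mp hx
      rw [inner_sub_left, hQ ξ x, hloc i x hxe, sub_eq_zero, hs, sum_inner]
      rw [Finset.sum_eq_single i]
      · exact ((hQj i _ (hmemE i)).2 x hx).symm
      · intro j _ hji
        -- Qj j (Φ (c j) ξ) ∈ peirce (c j) 1, x ∈ peirce (c i) 1, i ≠ j
        have hq := A.mem_peirce_iff.mp (hQj j _ (hmemE j)).1
        have hzero : A.mul (c j) x = 0 :=
          A.mul_peirce_zero (c j) (c i) (hidem j) (hidem i)
            (horth j i hji) x hxe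
        calc ⟪Qj j (Φ (c j) ξ), x⟫ = ⟪A.mul (c j) (Qj j (Φ (c j) ξ)), x⟫ := by rw [hq]
          _ = ⟪Qj j (Φ (c j) ξ), A.mul (c j) x⟫ := A.assoc_inner _ _ _
          _ = 0 := by rw [hzero, inner_zero_right]
      · intro hi; exact absurd (Finset.mem_univ i) hi
    · simp
    · intro a b ha hb
      rw [inner_add_right, ha, hb, add_zero]
  rw [← Submodule.starProjection_apply]
  exact Submodule.eq_starProjection_of_mem_of_inner_eq_zero hmem hperp
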